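/- Let f be a monic real polynomial of degree n ≥ 1 satisfying Assumption 1, with even/odd splitting f = p − q. If r ≥ 0 is a real root of f and x₀ is a real number with x₀ ≥ r, then x₀ · q(x₀) − r · p(x₀) ≥ 0; in particular, if x₀ > 0 then x₀ · q(x₀)/p(x₀) ≥ r. -/

import Mathlib

open Polynomial

lemma aux_prod_le (s : Multiset ℂ) (f g : ℂ → ℝ)
    (h : ∀ a ∈ s, 0 ≤ f a ∧ f a ≤ g a) :
    (s.map f).prod ≤ (s.map g).prod := by
  induction s using Multiset.induction_on with
  | empty => simp
  | cons a s ih =>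
      simp only [Multiset.map_cons, Multiset.prod_cons]
      have ha := h a (Multiset.mem_cons_self a s)
      have hs : ∀ b ∈ s, 0 ≤ f b ∧ f b ≤ g b := fun b hb => h b (Multiset.mem_cons_of_mem hb)
      have h1 : (0:ℝ) ≤ (s.map f).prod := by
        apply Multiset.prod_nonneg
        intro b hb
        obtain ⟨c, hc, rfl⟩ := Multiset.mem_map.mp hb
        exact (hs c hc).1
      exact mul_le_mul ha.2 (ih hs) h1 (le_trans ha.1 ha.2)

lemma aux_norm (g : Polynomial ℝ) (hg : g.Monic)
    (hroots : ∀ z : ℂ, (Polynomial.aeval z) g = 0 → 0 ≤ z.re)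
    (x : ℝ) (hx : 0 ≤ x) : |g.eval x| ≤ |g.eval (-x)| := by
  set gc := g.map (algebraMap ℝ ℂ) with hgc
  have hgcm : gc.Monic := hg.map _
  have hsplit : gc = (gc.roots.map fun a => X - C a).prod :=
    (IsAlgClosed.splits gc).eq_prod_roots_of_monic hgcm
  have hev : ∀ t : ℝ, |g.eval t| = (gc.roots.map fun a => ‖(t:ℂ) - a‖).prod := by
    intro t
    have h1 : ((g.eval t : ℝ) : ℂ) = gc.eval (t : ℂ) := by
      rw [hgc, eval_map, ← aeval_def]
      exact_mod_cast (Polynomial.aeval_ofReal (K := ℂ) g t).symm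
    have h2 : gc.eval (t:ℂ) = (gc.roots.map fun a => (t:ℂ) - a).prod := by
      conv_lhs => rw [hsplit]
      rw [eval_multiset_prod, Multiset.map_map]
      simp
    have h3 : |g.eval t| = ‖((g.eval t : ℝ) : ℂ)‖ := by
      rw [Complex.norm_real, Real.norm_eq_abs]
    rw [h3, h1, h2]
    exact (map_multiset_prod (normHom : ℂ →*₀ ℝ) _).trans (by rw [Multiset.map_map]; rfl)
  rw [hev x, hev (-x)]
  apply aux_prod_le
  intro a ha
  have hre : 0 ≤ a.re := by
    apply hroots
    have hne : gc ≠ 0 := hgcm.ne_zero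
    have := (Polynomial.mem_roots'.mp ha).2
    rw [Polynomial.aeval_def, ← eval_map]
    exact this
  refine ⟨norm_nonneg _, ?_⟩
  have h1 : ‖(x:ℂ) - a‖ ^ 2 ≤ ‖((-x:ℝ):ℂ) - a‖ ^ 2 := by
    rw [Complex.sq_norm, Complex.sq_norm, Complex.normSq_apply, Complex.normSq_apply]
    simp only [Complex.sub_re, Complex.sub_im, Complex.ofReal_re, Complex.ofReal_im]
    nlinarith [mul_nonneg hx hre]
  exact le_of_pow_le_pow_left₀ two_ne_zero (norm_nonneg _) h1

lemma aux_pos (P : Polynomial ℝ) (hm : P.Monic) (x : ℝ)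
    (h : ∀ t : ℝ, x ≤ t → P.eval t ≠ 0) : 0 < P.eval x := by
  rcases eq_or_ne P.natDegree 0 with h0 | h0
  · rw [hm.natDegree_eq_zero] at h0
    simp [h0]
  · have hdeg : 0 < P.degree := by
      rw [← natDegree_pos_iff_degree_pos]
      omega
    have htend := P.tendsto_atTop_of_leadingCoeff_nonneg hdeg (by simp [hm.leadingCoeff])
    obtain ⟨y, hy1, hy2⟩ := ((htend.eventually_ge_atTop 1).and
      (Filter.eventually_ge_atTop x)).exists
    rcases lt_or_ge 0 (P.eval x) with hpos | hneg
    · exact hpos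
    · exfalso
      have hcont : ContinuousOn (fun t => P.eval t) (Set.Icc x y) :=
        (Polynomial.continuous P).continuousOn
      have hmem : (0:ℝ) ∈ Set.Icc (P.eval x) (P.eval y) := ⟨hneg, by linarith⟩
      obtain ⟨t, ht, ht0⟩ := intermediate_value_Icc hy2 hcont hmem
      exact h t ht.1 ht0

theorem stmt6 (f : Polynomial ℝ) (n : ℕ) (hn : 1 ≤ n)
    (hmonic : f.Monic) (hdeg : f.natDegree = n)
    (has1 : ∀ z : ℂ, (Polynomial.aeval z) f = 0 → 0 ≤ z.re)
    (has2 : ∃ z : ℂ, (Polynomial.aeval z) f = 0 ∧ 0 < z.re)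
    (p q : ℝ → ℝ)
    (hp : ∀ x : ℝ, p x =
      ∑ j ∈ Finset.range (n + 1), if (n + j) % 2 = 0 then f.coeff j * x ^ j else 0)
    (hq : ∀ x : ℝ, q x =
      ∑ j ∈ Finset.range (n + 1), if (n + j) % 2 = 1 then -(f.coeff j) * x ^ j else 0)
    (r : ℝ) (hr : 0 ≤ r) (hroot : f.IsRoot r)
    (x₀ : ℝ) (hx₀ : r ≤ x₀) :
    0 ≤ x₀ * q x₀ - r * p x₀ ∧ (0 < x₀ → r ≤ x₀ * q x₀ / p x₀) := by
  obtain ⟨m, rfl⟩ : ∃ m, n = m + 1 := ⟨n - 1, by omega⟩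
  -- factor out the root
  have hfactor : (X - C r) * (f /ₘ (X - C r)) = f :=
    (mul_divByMonic_eq_iff_isRoot).mpr hroot
  set g : Polynomial ℝ := f /ₘ (X - C r) with hgdef
  have hgm : g.Monic :=
    (monic_X_sub_C r).of_mul_monic_left (by rw [hfactor]; exact hmonic)
  have hgdeg : g.natDegree = m := by
    have h1 := natDegree_mul (X_sub_C_ne_zero r) hgm.ne_zero
    rw [hfactor, hdeg, natDegree_X_sub_C] at h1
    omega
  have hgroots : ∀ z : ℂ, (Polynomial.aeval z) g = 0 → 0 ≤ z.re := by
    intro z hz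
    apply has1
    rw [← hfactor, map_mul, hz, mul_zero]
  have heval : ∀ t : ℝ, f.eval t = (t - r) * g.eval t := by
    intro t
    rw [← hfactor, eval_mul, eval_sub, eval_X, eval_C]
  -- the reflected polynomial h
  set h : Polynomial ℝ := C ((-1:ℝ)^m) * g.comp (-X) with hhdef
  have hH : ∀ t : ℝ, h.eval t = (-1:ℝ)^m * g.eval (-t) := by
    intro t
    simp [hhdef, eval_comp]
  have hhm : h.Monic := by
    unfold Polynomial.Monic
    rw [hhdef, leadingCoeff_mul, leadingCoeff_C,
      leadingCoeff_comp (by simp [natDegree_neg, natDegree_X]), hgm.leadingCoeff]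
    simp [hgdeg, leadingCoeff_neg, leadingCoeff_X, ← pow_add, ← two_mul]
  have hHpos : ∀ t : ℝ, 0 < t → 0 < h.eval t := by
    intro t ht
    apply aux_pos h hhm
    intro s hs hzero
    rw [hH] at hzero
    have hgz : g.eval (-s) = 0 := by
      rcases mul_eq_zero.mp hzero with h1 | h1
      · exact absurd h1 (pow_ne_zero _ (by norm_num))
      · exact h1
    have : (Polynomial.aeval ((-s : ℝ) : ℂ)) g = 0 := by
      rw [show ((-s:ℝ):ℂ) = (RCLike.ofReal (-s) : ℂ) from rfl, Polynomial.aeval_ofReal, hgz]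
      norm_num
    have := hgroots _ this
    simp only [Complex.ofReal_re] at this
    linarith
  have hHge : ∀ t : ℝ, 0 < t → |g.eval t| ≤ h.eval t := by
    intro t ht
    have h1 : |g.eval t| ≤ |g.eval (-t)| := aux_norm g hgm hgroots t ht.le
    have h2 : h.eval t = |g.eval (-t)| := by
      rw [← abs_of_pos (hHpos t ht), hH, abs_mul, abs_pow, abs_neg, abs_one, one_pow, one_mul]
    linarith
  -- p - q = f, p + q = (-1)^n f(-x)
  have hpq1 : ∀ x : ℝ, p x - q x = f.eval x := by
    intro x
    rw [hp, hq, ← Finset.sum_sub_distrib,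
      Polynomial.eval_eq_sum_range' (by rw [hdeg]; omega : f.natDegree < m + 1 + 1) x]
    apply Finset.sum_congr rfl
    intro j _
    rcases Nat.even_or_odd (m + 1 + j) with he | ho
    · rw [Nat.even_iff] at he
      simp [he]
    · rw [Nat.odd_iff] at ho
      simp [ho]
  have hpq2 : ∀ x : ℝ, p x + q x = (-1:ℝ)^(m+1) * f.eval (-x) := by
    intro x
    rw [hp, hq, ← Finset.sum_add_distrib,
      Polynomial.eval_eq_sum_range' (by rw [hdeg]; omega : f.natDegree < m + 1 + 1) (-x),
      Finset.mul_sum]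
    apply Finset.sum_congr rfl
    intro j _
    have e1 : (-x:ℝ)^j = (-1:ℝ)^j * x^j := by rw [neg_pow]
    rcases Nat.even_or_odd (m + 1 + j) with he | ho
    · rw [Nat.even_iff] at he
      have e2 : (-1:ℝ)^m * (-1:ℝ)^j = -1 := by
        rw [← pow_add]; exact Odd.neg_one_pow (by rw [Nat.odd_iff]; omega)
      simp only [he, if_pos rfl]
      norm_num
      rw [e1]
      linear_combination (f.coeff j * x^j) * e2
    · rw [Nat.odd_iff] at ho
      have e2 : (-1:ℝ)^m * (-1:ℝ)^j = 1 := by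
        rw [← pow_add]; exact Even.neg_one_pow (by rw [Nat.even_iff]; omega)
      simp only [ho]
      norm_num
      rw [e1]
      linear_combination (f.coeff j * x^j) * e2
  -- key evaluations at x₀
  set G := g.eval x₀ with hG
  set H := h.eval x₀ with hHdef2
  have hfx : f.eval x₀ = (x₀ - r) * G := heval x₀
  have hfnx : (-1:ℝ)^(m+1) * f.eval (-x₀) = (x₀ + r) * H := by
    rw [heval (-x₀), hHdef2, hH]
    have : (-1:ℝ)^(m+1) = (-1:ℝ)^m * (-1) := by rw [pow_succ]
    rw [this]; ring
  have hpx : p x₀ = ((x₀ - r) * G + (x₀ + r) * H) / 2 := by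
    have h1 := hpq1 x₀
    have h2 := hpq2 x₀
    rw [hfx] at h1
    rw [hfnx] at h2
    linarith
  have hqx : q x₀ = ((x₀ + r) * H - (x₀ - r) * G) / 2 := by
    have h1 := hpq1 x₀
    have h2 := hpq2 x₀
    rw [hfx] at h1
    rw [hfnx] at h2
    linarith
  -- main inequality
  have key : x₀ * q x₀ - r * p x₀ = (x₀^2 - r^2) * (H - G) / 2 := by
    rw [hpx, hqx]; ring
  have parta : 0 ≤ x₀ * q x₀ - r * p x₀ := by
    rcases lt_or_ge 0 x₀ with hx | hx
    · have h1 := hHge x₀ hx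
      have h2 := abs_nonneg G
      have h3 : G ≤ H := (le_abs_self G).trans h1
      have h4 : 0 ≤ x₀^2 - r^2 := by nlinarith
      rw [key]
      have := mul_nonneg h4 (by linarith : (0:ℝ) ≤ H - G)
      linarith
    · have hx0 : x₀ = 0 := le_antisymm hx (hr.trans hx₀)
      have hr0 : r = 0 := le_antisymm (hx0 ▸ hx₀) hr
      rw [key, hx0, hr0]
      ring_nf
      exact le_refl 0
  refine ⟨parta, ?_⟩
  intro hx
  have h1 := hHge x₀ hx
  have h3 : -H ≤ G := by
    have := neg_abs_le G
    linarith
  have hHp : 0 < H := hHpos x₀ hx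
  have hpnn : r * H ≤ p x₀ := by
    rw [hpx]
    nlinarith [mul_nonneg (by linarith : (0:ℝ) ≤ x₀ - r) (by linarith : (0:ℝ) ≤ G + H)]
  rcases eq_or_lt_of_le hr with hr0 | hr0
  · rw [← hr0]
    apply div_nonneg _ _
    · have := parta
      rw [← hr0] at this
      linarith
    · have : (0:ℝ) ≤ r * H := by rw [← hr0]; ring_nf; exact le_refl 0
      linarith
  · have hppos : 0 < p x₀ := lt_of_lt_of_le (mul_pos hr0 hHp) hpnn
    rw [le_div_iff₀ hppos]
    linarith
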